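/- arXiv:2601.17034 — 2 statements merged into one kernel-verified Lean document; each statement's English description precedes it below -/
import Mathlib

section
/- For real constants B ≥ 0, C > 0, x₂ > 0, and k with B k² < C (ensuring convergence), the Yukawa-form function satisfies exp(-x₂√(Bk²+C))/√(Bk²+C) = Σ_{n=0}^∞ √(2/π) · ((-1)ⁿ Bⁿ k^{2n} / n!) · 2^{-n} · x₂^{n+1/2} · C^{-n/2-1/4} · K_{n+1/2}(x₂√C), where K_ν denotes the modified Bessel function of the second kind. -/
open MeasureTheory Real Set

/-- The modified Bessel function of the second kind (Macdonald function),
via its standard integral representation (valid for `x > 0`). -/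
noncomputable def besselK (ν x : ℝ) : ℝ :=
  ∫ t in Set.Ioi (0:ℝ), Real.exp (-x * Real.cosh t) * Real.cosh (ν * t)


lemma key_bound {a c ν : ℝ} (ha : 0 < a) (hc : 0 < c) (t : ℝ) :
    -(a * Real.exp t) - c * Real.exp (-t) + ν * t ≤
      max ((|ν| + 1) ^ 2 / a + a) ((|ν| + 1) ^ 2 / c + c) - |t| := by
  set M : ℝ := max ((|ν| + 1) ^ 2 / a + a) ((|ν| + 1) ^ 2 / c + c) with hM
  rcases le_total 0 t with h | h
  · have h1 : 1 + t / 2 ≤ Real.exp (t / 2) := by linarith [Real.add_one_le_exp (t/2)]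
    have h2 : Real.exp t = Real.exp (t / 2) ^ 2 := by
      rw [sq, ← Real.exp_add]; norm_num
    have h3 : (1 + t / 2) ^ 2 ≤ Real.exp t := by
      rw [h2]; apply sq_le_sq' <;> nlinarith
    set D : ℝ := (|ν| + 1) ^ 2 / a with hD
    have hDa : D * a = (|ν| + 1) ^ 2 := div_mul_cancel₀ _ ha.ne'
    have hq : a * ((1 + t/2)^2) + D ≥ (|ν| + 1) * t := by
      nlinarith [sq_nonneg (a * (1 + t/2) - (|ν| + 1)), abs_nonneg ν, ha]
    have habs : ν * t ≤ |ν| * t := by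
      rcases abs_cases ν with ⟨h', _⟩ | ⟨h', _⟩ <;> nlinarith
    have hMD : M ≥ D + a := le_max_left _ _
    have habt : |t| = t := abs_of_nonneg h
    have h6 : a * ((1 + t/2)^2) ≤ a * Real.exp t := mul_le_mul_of_nonneg_left h3 ha.le
    have h7 : 0 < c * Real.exp (-t) := by positivity
    linarith
  · have h1 : 1 + (-t) / 2 ≤ Real.exp ((-t) / 2) := by linarith [Real.add_one_le_exp (-t/2)]
    have h2 : Real.exp (-t) = Real.exp ((-t) / 2) ^ 2 := by
      rw [sq, ← Real.exp_add]; norm_num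
    have h3 : (1 + (-t) / 2) ^ 2 ≤ Real.exp (-t) := by
      rw [h2]; apply sq_le_sq' <;> nlinarith
    set D : ℝ := (|ν| + 1) ^ 2 / c with hD
    have hDc : D * c = (|ν| + 1) ^ 2 := div_mul_cancel₀ _ hc.ne'
    have hq : c * ((1 + (-t)/2)^2) + D ≥ (|ν| + 1) * (-t) := by
      nlinarith [sq_nonneg (c * (1 + (-t)/2) - (|ν| + 1)), abs_nonneg ν, hc]
    have habs : ν * t ≤ |ν| * (-t) := by
      rcases abs_cases ν with ⟨h', _⟩ | ⟨h', _⟩ <;> nlinarith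
    have hMD : M ≥ D + c := le_max_right _ _
    have habt : |t| = -t := abs_of_nonpos h
    have h6 : c * ((1 + (-t)/2)^2) ≤ c * Real.exp (-t) := mul_le_mul_of_nonneg_left h3 hc.le
    have h7 : 0 < a * Real.exp t := by positivity
    linarith

lemma integrable_exp_neg_abs' : Integrable (fun t : ℝ => Real.exp (-|t|)) := by
  have h1 : IntegrableOn (fun t : ℝ => Real.exp (-|t|)) (Iic 0) := by
    apply (integrableOn_exp_Iic 0).congr_fun ?_ measurableSet_Iic
    intro t ht
    simp only [mem_Iic] at ht
    simp [abs_of_nonpos ht]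
  have h2 : IntegrableOn (fun t : ℝ => Real.exp (-|t|)) (Ioi 0) := by
    have := exp_neg_integrableOn_Ioi (0:ℝ) (b := 1) one_pos
    apply this.congr_fun ?_ measurableSet_Ioi
    intro t ht
    simp only [mem_Ioi] at ht
    simp [abs_of_nonneg ht.le]
  have h3 : IntegrableOn (fun t : ℝ => Real.exp (-|t|)) (Iic 0 ∪ Ioi 0) := h1.union h2
  rw [Iic_union_Ioi] at h3
  exact integrableOn_univ.mp h3

/-- Integrability of `exp (-a e^t - c e^{-t} + ν t)` on `ℝ` for `a, c > 0`. -/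
lemma integrable_aux {a c ν : ℝ} (ha : 0 < a) (hc : 0 < c) :
    Integrable (fun t : ℝ => Real.exp (-(a * Real.exp t) - c * Real.exp (-t) + ν * t)) := by
  set M : ℝ := max ((|ν| + 1) ^ 2 / a + a) ((|ν| + 1) ^ 2 / c + c)
  have hint : Integrable (fun t : ℝ => Real.exp M * Real.exp (-|t|)) :=
    integrable_exp_neg_abs'.const_mul _
  apply hint.mono
  · exact Continuous.aestronglyMeasurable (by fun_prop)
  · filter_upwards with t
    rw [Real.norm_eq_abs, Real.norm_eq_abs, abs_of_pos (Real.exp_pos _),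
      abs_of_pos (by positivity), ← Real.exp_add]
    exact Real.exp_le_exp.2 (by linarith [key_bound ha hc (ν := ν) t])



lemma exp_form (w ν t : ℝ) :
    Real.exp (-w * Real.cosh t + ν * t)
      = Real.exp (-(w/2 * Real.exp t) - w/2 * Real.exp (-t) + ν * t) := by
  rw [Real.cosh_eq]; ring_nf

lemma integrable_bessel_line {w ν : ℝ} (hw : 0 < w) :
    Integrable (fun t : ℝ => Real.exp (-w * Real.cosh t + ν * t)) := by
  have := integrable_aux (a := w/2) (c := w/2) (ν := ν) (by linarith) (by linarith)
  exact this.congr (by filter_upwards with t using (exp_form w ν t).symm)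
  
lemma integral_line_eq (ν w : ℝ) (hw : 0 < w) :
    (∫ t : ℝ, Real.exp (-w * Real.cosh t + ν * t)) = 2 * besselK ν w := by
  have hint := integrable_bessel_line (w := w) (ν := ν) hw
  have hsplit : (∫ t : ℝ, Real.exp (-w * Real.cosh t + ν * t))
      = (∫ t in Iic (0:ℝ), Real.exp (-w * Real.cosh t + ν * t))
        + ∫ t in Ioi (0:ℝ), Real.exp (-w * Real.cosh t + ν * t) :=
    (intervalIntegral.integral_Iic_add_Ioi hint.integrableOn hint.integrableOn).symm
  have hneg : (∫ t in Iic (0:ℝ), Real.exp (-w * Real.cosh t + ν * t))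
      = ∫ t in Ioi (0:ℝ), Real.exp (-w * Real.cosh t + ν * (-t)) := by
    have h := integral_comp_neg_Ioi (0:ℝ) (fun t => Real.exp (-w * Real.cosh t + ν * t))
    simp only [Real.cosh_neg, neg_zero] at h
    exact h.symm
  have hadd : (∫ t in Ioi (0:ℝ), Real.exp (-w * Real.cosh t + ν * (-t)))
      + (∫ t in Ioi (0:ℝ), Real.exp (-w * Real.cosh t + ν * t))
      = ∫ t in Ioi (0:ℝ), (Real.exp (-w * Real.cosh t + ν * (-t))
          + Real.exp (-w * Real.cosh t + ν * t)) := by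
    rw [integral_add]
    · have h2 := integrable_bessel_line (w := w) (ν := -ν) hw
      have : (fun t : ℝ => Real.exp (-w * Real.cosh t + ν * (-t)))
          = fun t : ℝ => Real.exp (-w * Real.cosh t + (-ν) * t) := by
        funext t; ring_nf
      rw [this]
      exact h2.integrableOn
    · exact hint.integrableOn
  rw [hsplit, hneg, hadd, besselK, ← integral_const_mul]
  congr 1 with t
  simp only [mul_neg, Real.exp_add, Real.cosh_eq]
  ring



lemma besselK_half {w : ℝ} (hw : 0 < w) :
    besselK (1/2) w = Real.sqrt (π / (2 * w)) * Real.exp (-w) := by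
  have himg : (fun t : ℝ => Real.sinh (t/2)) '' (Ioi 0) = Ioi (0:ℝ) := by
    ext s
    constructor
    · rintro ⟨t, ht, rfl⟩
      exact Real.sinh_pos_iff.2 (by simpa using half_pos (show (0:ℝ) < t from ht))
    · intro hs
      refine ⟨2 * Real.arsinh s, ?_, ?_⟩
      · have : 0 < Real.arsinh s := by
          rwa [← Real.arsinh_zero, Real.arsinh_lt_arsinh]
        simpa using this
      · show Real.sinh (2 * Real.arsinh s / 2) = s
        rw [show (2:ℝ) * Real.arsinh s / 2 = Real.arsinh s from by ring, Real.sinh_arsinh]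
  have hderiv : ∀ t ∈ Ioi (0:ℝ), HasDerivWithinAt (fun t : ℝ => Real.sinh (t/2))
      (Real.cosh (t/2) / 2) (Ioi 0) t := by
    intro t _
    have h1 : HasDerivAt (fun t : ℝ => Real.sinh (t/2)) (Real.cosh (t/2) * (1/2)) t :=
      ((hasDerivAt_id t).div_const 2).sinh
    simpa [div_eq_mul_inv, mul_comm] using h1.hasDerivWithinAt
  have hinj : InjOn (fun t : ℝ => Real.sinh (t/2)) (Ioi 0) := by
    intro a _ b _ hab
    have := Real.sinh_injective hab
    linarith
  have hcov := integral_image_eq_integral_abs_deriv_smul measurableSet_Ioi hderiv hinj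
    (fun s => 2 * Real.exp (-w * (1 + 2 * s^2)))
  rw [himg] at hcov
  have hrhs : (∫ t in Ioi (0:ℝ), |Real.cosh (t/2) / 2| •
      (2 * Real.exp (-w * (1 + 2 * (Real.sinh (t/2))^2))))
      = besselK (1/2) w := by
    rw [besselK]
    congr 1 with t
    have hcosh : Real.cosh t = 1 + 2 * Real.sinh (t/2)^2 := by
      have h2 : Real.cosh (2 * (t/2)) = Real.cosh (t/2)^2 + Real.sinh (t/2)^2 :=
        Real.cosh_two_mul _
      have h3 : Real.cosh (t/2)^2 = Real.sinh (t/2)^2 + 1 := Real.cosh_sq _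
      have : (2:ℝ) * (t/2) = t := by ring
      rw [this] at h2
      linarith
    have hpos : (0:ℝ) < Real.cosh (t/2) / 2 := by positivity
    rw [abs_of_pos hpos, smul_eq_mul, hcosh]
    have : (1:ℝ)/2 * t = t/2 := by ring
    rw [this]
    ring
  have hlhs : (∫ s in Ioi (0:ℝ), 2 * Real.exp (-w * (1 + 2 * s^2)))
      = Real.sqrt (π / (2 * w)) * Real.exp (-w) := by
    have : ∀ s : ℝ, Real.exp (-w * (1 + 2 * s^2)) = Real.exp (-w) * Real.exp (-(2*w) * s^2) := by
      intro s; rw [← Real.exp_add]; ring_nf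
    simp_rw [this, ← mul_assoc]
    rw [integral_const_mul, integral_gaussian_Ioi]
    ring
  rw [← hrhs, ← hcov, hlhs]






theorem stmt0 (B C x₂ k : ℝ) (hB : 0 ≤ B) (hC : 0 < C) (hx : 0 < x₂)
    (hconv : B * k ^ 2 < C) :
    Real.exp (-x₂ * Real.sqrt (B * k ^ 2 + C)) / Real.sqrt (B * k ^ 2 + C) =
      ∑' n : ℕ, Real.sqrt (2 / π) * ((-1) ^ n * B ^ n * k ^ (2 * n) / n.factorial) *
        (2 : ℝ) ^ (-(n : ℝ)) * x₂ ^ ((n : ℝ) + 1 / 2) * C ^ (-(n : ℝ) / 2 - 1 / 4) *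
        besselK ((n : ℝ) + 1 / 2) (x₂ * Real.sqrt C) := by
  set u : ℝ := B * k ^ 2 with hu
  have hu0 : 0 ≤ u := by positivity
  set p : ℝ := u + C with hp
  have hp0 : 0 < p := by positivity
  have hsC : 0 < Real.sqrt C := Real.sqrt_pos.2 hC
  have hsp : 0 < Real.sqrt p := Real.sqrt_pos.2 hp0
  set z : ℝ := x₂ * Real.sqrt C with hz
  have hz0 : 0 < z := by positivity
  set q : ℝ := x₂ * Real.sqrt p with hq
  have hq0 : 0 < q := by positivity
  set d : ℝ := x₂ / (2 * Real.sqrt C) with hd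
  have hd0 : 0 < d := by positivity
  set K₀ : ℝ := Real.sqrt (2/π) * x₂ ^ ((1:ℝ)/2) * C ^ (-(1:ℝ)/4) with hK₀
  set r : ℝ := -(u * d) with hr
  -- coefficient rewrite
  have hcn : ∀ n : ℕ, Real.sqrt (2 / π) * ((-1) ^ n * B ^ n * k ^ (2 * n) / n.factorial) *
      (2 : ℝ) ^ (-(n : ℝ)) * x₂ ^ ((n : ℝ) + 1 / 2) * C ^ (-(n : ℝ) / 2 - 1 / 4)
      = K₀ * r ^ n / n.factorial := by
    intro n
    have e1 : (2:ℝ) ^ (-(n:ℝ)) = ((2:ℝ)^(n:ℕ))⁻¹ := by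
      rw [Real.rpow_neg (by norm_num), Real.rpow_natCast]
    have e2 : x₂ ^ ((n:ℝ) + 1/2) = x₂^(n:ℕ) * x₂ ^ ((1:ℝ)/2) := by
      rw [Real.rpow_add hx, Real.rpow_natCast]
    have e3 : C ^ (-(n:ℝ)/2 - 1/4) = ((Real.sqrt C)⁻¹)^(n:ℕ) * C ^ (-(1:ℝ)/4) := by
      rw [show -(n:ℝ)/2 - 1/4 = (-(1:ℝ)/2)*(n:ℝ) + (-(1:ℝ)/4) by ring,
        Real.rpow_add hC, Real.rpow_mul hC.le, Real.rpow_natCast]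
      congr 2
      rw [show (-(1:ℝ)/2) = -((1:ℝ)/2) by norm_num, Real.rpow_neg hC.le,
        ← Real.sqrt_eq_rpow]
    rw [e1, e2, e3, hr, hK₀, hd, pow_mul k 2 n]
    have h2n : ((2:ℝ)^(n:ℕ)) ≠ 0 := by positivity
    have hsCn : ((Real.sqrt C))^(n:ℕ) ≠ 0 := by positivity
    have hfac : (n.factorial : ℝ) ≠ 0 := by positivity
    field_simp
    have hm : ((-1/2:ℝ))^n * 2^n = (-1)^n := by rw [← mul_pow]; norm_num
    rw [hu]
    linear_combination (-(B ^ n * k ^ (n * 2) * x₂ ^ n * (Real.sqrt C)⁻¹ ^ n)) * hm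
  -- term as integral
  have hterm : ∀ n : ℕ, K₀ * r ^ n / n.factorial * besselK ((n : ℝ) + 1 / 2) z
      = ∫ t : ℝ, (K₀ * r ^ n / n.factorial / 2) * Real.exp (-z * Real.cosh t + ((n:ℝ) + 1/2) * t) := by
    intro n
    rw [integral_const_mul, integral_line_eq _ _ hz0]
    ring
  -- the summand functions
  set F : ℕ → ℝ → ℝ := fun n t => (K₀ * r ^ n / n.factorial / 2) *
    Real.exp (-z * Real.cosh t + ((n:ℝ) + 1/2) * t) with hF
  have hmeas : ∀ n, AEStronglyMeasurable (F n) volume := by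
    intro n
    exact Continuous.aestronglyMeasurable (by fun_prop)
  have hexp_tsum : ∀ x : ℝ, Real.exp x = ∑' n : ℕ, x ^ n / n.factorial := by
    intro x
    rw [Real.exp_eq_exp_ℝ, NormedSpace.exp_eq_tsum_div]
  have hdC : d * C = z / 2 := by
    have hCC : Real.sqrt C * Real.sqrt C = C := Real.mul_self_sqrt hC.le
    have key0 : ∀ a : ℝ, a ≠ 0 → x₂/(2*a)*(a*a) = x₂*a/2 := by
      intro a ha; field_simp
    rw [show d * C = x₂/(2*Real.sqrt C)*(Real.sqrt C*Real.sqrt C) by rw [hCC, hd],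
      key0 _ hsC.ne', hz]
  -- norm of each term
  have hnorm : ∀ (n : ℕ) (t : ℝ), ‖F n t‖
      = |K₀|/2 * Real.exp (-z * Real.cosh t + (1/2) * t) * ((u * d * Real.exp t) ^ n / n.factorial) := by
    intro n t
    have hsplit : Real.exp (-z * Real.cosh t + ((n:ℝ) + 1/2) * t)
        = Real.exp (-z * Real.cosh t + (1/2) * t) * (Real.exp t) ^ n := by
      rw [← Real.exp_nat_mul, ← Real.exp_add]
      congr 1
      push_cast
      ring
    rw [hF]
    simp only [Real.norm_eq_abs, abs_mul, abs_div, Real.abs_exp, abs_pow, hr, abs_neg,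
      abs_of_nonneg (mul_nonneg hu0 hd0.le), Nat.abs_cast, hsplit]
    rw [abs_of_nonneg (by norm_num : (0:ℝ) ≤ 2)]
    ring
  -- pointwise absolute sum
  have habs_summable : ∀ t : ℝ, Summable (fun n => ‖F n t‖) := by
    intro t
    have := (Real.summable_pow_div_factorial (u * d * Real.exp t)).mul_left
      (|K₀|/2 * Real.exp (-z * Real.cosh t + (1/2) * t))
    exact this.congr (fun n => (hnorm n t).symm)
  have habs : ∀ t : ℝ, ∑' n : ℕ, ‖F n t‖
      = |K₀|/2 * Real.exp (-(d * (C - u) * Real.exp t) - d * C * Real.exp (-t) + (1/2) * t) := by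
    intro t
    calc ∑' n : ℕ, ‖F n t‖
        = ∑' n : ℕ, (|K₀|/2 * Real.exp (-z * Real.cosh t + (1/2) * t))
            * ((u * d * Real.exp t) ^ n / n.factorial) := by
          exact tsum_congr (fun n => by rw [hnorm n t])
      _ = (|K₀|/2 * Real.exp (-z * Real.cosh t + (1/2) * t)) * Real.exp (u * d * Real.exp t) := by
          rw [tsum_mul_left, ← hexp_tsum]
      _ = |K₀|/2 * Real.exp (-(d * (C - u) * Real.exp t) - d * C * Real.exp (-t) + (1/2) * t) := by
          rw [mul_assoc, ← Real.exp_add]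
          congr 2
          rw [Real.cosh_eq]
          linear_combination (Real.exp t + Real.exp (-t)) * hdC
  have hGint : Integrable (fun t : ℝ =>
      |K₀|/2 * Real.exp (-(d * (C - u) * Real.exp t) - d * C * Real.exp (-t) + (1/2) * t)) := by
    exact (integrable_aux (by nlinarith : (0:ℝ) < d * (C - u)) (by positivity)).const_mul _
  have hfin : ∑' n : ℕ, ∫⁻ t : ℝ, ‖F n t‖₊ ∂volume ≠ ⊤ := by
    rw [show (∑' n : ℕ, ∫⁻ t : ℝ, (‖F n t‖₊ : ENNReal) ∂volume) = ∫⁻ t : ℝ, ∑' n : ℕ, (‖F n t‖₊ : ENNReal) ∂volume from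
      (lintegral_tsum (fun n => (hmeas n).enorm)).symm]
    have hpt : ∀ t : ℝ, ∑' n : ℕ, (‖F n t‖₊ : ENNReal)
        = ENNReal.ofReal (|K₀|/2 * Real.exp (-(d * (C - u) * Real.exp t)
            - d * C * Real.exp (-t) + (1/2) * t)) := by
      intro t
      rw [← habs t, ENNReal.ofReal_tsum_of_nonneg (fun n => norm_nonneg _) (habs_summable t)]
      exact tsum_congr (fun n => (ofReal_norm (F n t)).symm)
    simp_rw [hpt]
    rw [← ofReal_integral_eq_lintegral_ofReal hGint
      (Filter.Eventually.of_forall (fun t => by positivity))]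
    exact ENNReal.ofReal_ne_top
  -- pointwise signed sum
  have hsum : ∀ t : ℝ, ∑' n : ℕ, F n t
      = (K₀/2) * Real.exp (-(d * p * Real.exp t) - d * C * Real.exp (-t) + (1/2) * t) := by
    intro t
    calc ∑' n : ℕ, F n t
        = ∑' n : ℕ, (K₀/2 * Real.exp (-z * Real.cosh t + (1/2) * t))
            * ((r * Real.exp t) ^ n / n.factorial) := by
          refine tsum_congr (fun n => ?_)
          show K₀ * r ^ n / n.factorial / 2 * Real.exp (-z * Real.cosh t + ((n:ℝ) + 1/2) * t) = _
          have hsplit : Real.exp (-z * Real.cosh t + ((n:ℝ) + 1/2) * t)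
              = Real.exp (-z * Real.cosh t + (1/2) * t) * (Real.exp t) ^ n := by
            rw [← Real.exp_nat_mul, ← Real.exp_add]
            congr 1
            push_cast
            ring
          rw [hsplit, mul_pow]
          ring
      _ = (K₀/2 * Real.exp (-z * Real.cosh t + (1/2) * t)) * Real.exp (r * Real.exp t) := by
          rw [tsum_mul_left, ← hexp_tsum]
      _ = (K₀/2) * Real.exp (-(d * p * Real.exp t) - d * C * Real.exp (-t) + (1/2) * t) := by
          rw [mul_assoc, ← Real.exp_add]
          congr 2
          rw [Real.cosh_eq, hr, hp]
          linear_combination (Real.exp t + Real.exp (-t)) * hdC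
  -- swap
  have hswap : (∑' n : ℕ, ∫ t : ℝ, F n t) = ∫ t : ℝ, ∑' n : ℕ, F n t :=
    (integral_tsum hmeas hfin).symm
  -- shift
  set δ : ℝ := Real.log (Real.sqrt C / Real.sqrt p) with hδ
  have hshift : (∫ t : ℝ, (K₀/2) * Real.exp (-(d * p * Real.exp t) - d * C * Real.exp (-t) + (1/2) * t))
      = ∫ t : ℝ, (K₀/2) * Real.exp (δ/2) * Real.exp (-q * Real.cosh t + (1/2) * t) := by
    have hpp : Real.sqrt p * Real.sqrt p = p := Real.mul_self_sqrt hp0.le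
    have hCC : Real.sqrt C * Real.sqrt C = C := Real.mul_self_sqrt hC.le
    have hexpδ : Real.exp δ = Real.sqrt C / Real.sqrt p := Real.exp_log (by positivity)
    have hexpδ' : Real.exp (-δ) = Real.sqrt p / Real.sqrt C := by
      rw [Real.exp_neg, hexpδ, inv_div]
    have hdp : d * p * (Real.sqrt C / Real.sqrt p) = q / 2 := by
      have key : ∀ a b : ℝ, a ≠ 0 → b ≠ 0 → x₂/(2*a)*(b*b)*(a/b) = x₂*b/2 := by
        intro a b ha hb; field_simp
      rw [show d * p * (Real.sqrt C / Real.sqrt p) = x₂/(2*Real.sqrt C)*(Real.sqrt p*Real.sqrt p)*(Real.sqrt C/Real.sqrt p) by rw [hpp, hd],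
        key _ _ hsC.ne' hsp.ne', hq]
    have hdC2 : d * C * (Real.sqrt p / Real.sqrt C) = q / 2 := by
      have key2 : ∀ a b : ℝ, a ≠ 0 → b ≠ 0 → x₂/(2*a)*(a*a)*(b/a) = x₂*b/2 := by
        intro a b ha hb; field_simp
      rw [show d * C * (Real.sqrt p / Real.sqrt C) = x₂/(2*Real.sqrt C)*(Real.sqrt C*Real.sqrt C)*(Real.sqrt p/Real.sqrt C) by rw [hCC, hd],
        key2 _ _ hsC.ne' hsp.ne', hq]
    rw [← integral_add_right_eq_self
      (fun t => (K₀/2) * Real.exp (-(d * p * Real.exp t) - d * C * Real.exp (-t) + (1/2) * t)) δ]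
    congr 1 with t
    show (K₀/2) * Real.exp (-(d * p * Real.exp (t + δ)) - d * C * Real.exp (-(t + δ)) + (1/2) * (t + δ)) = _
    rw [show -(t + δ) = (-t) + (-δ) from by ring, Real.exp_add t δ, Real.exp_add (-t) (-δ),
      hexpδ, hexpδ']
    rw [show (K₀/2) * Real.exp (δ/2) * Real.exp (-q * Real.cosh t + (1/2) * t)
      = (K₀/2) * Real.exp ((-q * Real.cosh t + (1/2) * t) + δ/2) from by
        rw [Real.exp_add (-q * Real.cosh t + (1/2) * t) (δ/2)]; ring]
    congr 1
    congr 1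
    rw [Real.cosh_eq]
    linear_combination (-(Real.exp t)) * hdp + (-(Real.exp (-t))) * hdC2
  -- conclude
  rw [tsum_congr (fun n => by rw [hcn n, hterm n])]
  rw [show (∑' n : ℕ, ∫ t : ℝ, F n t) = _ from hswap]
  rw [integral_congr_ae (Filter.Eventually.of_forall hsum), hshift,
    integral_const_mul, integral_line_eq _ _ hq0, besselK_half hq0]
  -- final algebra
  have hssC : Real.sqrt (Real.sqrt C) * Real.sqrt (Real.sqrt C) = Real.sqrt C :=
    Real.mul_self_sqrt (Real.sqrt_nonneg C)
  have hssp : Real.sqrt (Real.sqrt p) * Real.sqrt (Real.sqrt p) = Real.sqrt p :=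
    Real.mul_self_sqrt (Real.sqrt_nonneg p)
  have hexpδ2 : Real.exp (δ/2) = Real.sqrt (Real.sqrt C) / Real.sqrt (Real.sqrt p) := by
    rw [show δ/2 = Real.log (Real.sqrt C / Real.sqrt p) * (1/2) from by rw [hδ]; ring,
      ← Real.rpow_def_of_pos (by positivity), ← Real.sqrt_eq_rpow,
      Real.sqrt_div (Real.sqrt_nonneg C)]
  have hK₀' : K₀ = Real.sqrt 2 / Real.sqrt π * Real.sqrt x₂ / Real.sqrt (Real.sqrt C) := by
    rw [hK₀, Real.sqrt_div' 2 pi_pos.le, ← Real.sqrt_eq_rpow,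
      show (-(1:ℝ)/4) = -((1:ℝ)/4) from by norm_num, Real.rpow_neg hC.le,
      show ((1:ℝ)/4) = (1/2 : ℝ) * (1/2 : ℝ) from by norm_num, Real.rpow_mul hC.le,
      ← Real.sqrt_eq_rpow, ← Real.sqrt_eq_rpow]
    field_simp
  have hsq : Real.sqrt (π / (2 * q)) = Real.sqrt π / (Real.sqrt 2 * Real.sqrt x₂ *
      Real.sqrt (Real.sqrt p)) := by
    rw [Real.sqrt_div pi_pos.le, hq, show (2:ℝ) * (x₂ * Real.sqrt p) = 2 * x₂ * Real.sqrt p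
      from by ring, Real.sqrt_mul (by positivity), Real.sqrt_mul (by norm_num : (0:ℝ) ≤ 2)]
  rw [hexpδ2, hK₀', hsq, hq]
  have hπ : (0:ℝ) < Real.sqrt π := Real.sqrt_pos.2 pi_pos
  have h2 : (0:ℝ) < Real.sqrt 2 := by positivity
  have hx2 : (0:ℝ) < Real.sqrt x₂ := Real.sqrt_pos.2 hx
  have hssC0 : (0:ℝ) < Real.sqrt (Real.sqrt C) := Real.sqrt_pos.2 hsC
  have hssp0 : (0:ℝ) < Real.sqrt (Real.sqrt p) := Real.sqrt_pos.2 hsp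
  field_simp
  linear_combination hssp
end

section
/- For x₂ > 0 and η > 0, the three-dimensional integral ∫_{ℝ³} (e^{-η|x₁|}/|x₁|) · (e^{-η|x₁-x₂|}/|x₁-x₂|) d³x₁ equals 2π e^{-η x₂}/η. -/
open MeasureTheory Real Set

namespace Stmt5Aux

theorem lintegral_comp_polarCoord_symm (g : ℝ × ℝ → ENNReal) :
    ∫⁻ p, g p = ∫⁻ p in polarCoord.target, ENNReal.ofReal p.1 * g (polarCoord.symm p) := by
  set B : ℝ × ℝ → ℝ × ℝ →L[ℝ] ℝ × ℝ := fun p =>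
    LinearMap.toContinuousLinearMap (Matrix.toLin (Module.Basis.finTwoProd ℝ) (Module.Basis.finTwoProd ℝ)
      !![cos p.2, -p.1 * sin p.2; sin p.2, p.1 * cos p.2])
  have B_det : ∀ p, (B p).det = p.1 := by
    intro p
    conv_rhs => rw [← one_mul p.1, ← cos_sq_add_sin_sq p.2]
    simp only [B, neg_mul, LinearMap.det_toContinuousLinearMap, LinearMap.det_toLin,
      Matrix.det_fin_two_of, sub_neg_eq_add]
    ring
  calc
    ∫⁻ p, g p = ∫⁻ p in polarCoord.source, g p := by
      rw [← setLIntegral_univ]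
      exact setLIntegral_congr polarCoord_source_ae_eq_univ.symm
    _ = ∫⁻ p in polarCoord.symm '' polarCoord.target, g p := by
      rw [polarCoord.symm_image_target_eq_source]
    _ = ∫⁻ p in polarCoord.target, ENNReal.ofReal |(B p).det| * g (polarCoord.symm p) := by
      refine lintegral_image_eq_lintegral_abs_det_fderiv_mul volume
        polarCoord.open_target.measurableSet
        (fun p _ => (hasFDerivAt_polarCoord_symm p).hasFDerivWithinAt) ?_ g
      have := polarCoord.symm.injOn
      rwa [OpenPartialHomeomorph.symm_source] at this
    _ = ∫⁻ p in polarCoord.target, ENNReal.ofReal p.1 * g (polarCoord.symm p) := by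
      refine setLIntegral_congr_fun polarCoord.open_target.measurableSet
        (fun p hp => ?_)
      rw [B_det, abs_of_pos hp.1]

end Stmt5Aux

namespace Stmt5Aux

theorem lintegral_image_1d {s : Set ℝ} {f f' : ℝ → ℝ} (hs : MeasurableSet s)
    (hf' : ∀ x ∈ s, HasDerivWithinAt f (f' x) s x) (hf : InjOn f s) (g : ℝ → ENNReal) :
    ∫⁻ x in f '' s, g x = ∫⁻ x in s, ENNReal.ofReal |f' x| * g (f x) := by
  simpa only [ContinuousLinearMap.det_toSpanSingleton] using
    lintegral_image_eq_lintegral_abs_det_fderiv_mul volume hs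
      (fun x hx => (hf' x hx).hasFDerivWithinAt) hf g

noncomputable def φ (a b s : ℝ) : ℝ := √(s ^ 2 + a ^ 2) + √(s ^ 2 + b ^ 2)

lemma sqrt_hasDerivAt (a : ℝ) {s : ℝ} (h : 0 < s ^ 2 + a ^ 2) :
    HasDerivAt (fun s => √(s ^ 2 + a ^ 2)) (s / √(s ^ 2 + a ^ 2)) s := by
  have h1 : HasDerivAt (fun s : ℝ => s ^ 2 + a ^ 2) (2 * s) s := by
    simpa using (hasDerivAt_pow 2 s).add_const (a ^ 2)
  have hu : √(s ^ 2 + a ^ 2) ≠ 0 := (Real.sqrt_pos.mpr h).ne'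
  convert h1.sqrt h.ne' using 1
  field_simp

lemma φ_hasDerivAt (a b : ℝ) {s : ℝ} (hs : 0 < s) :
    HasDerivAt (φ a b) (s / √(s ^ 2 + a ^ 2) + s / √(s ^ 2 + b ^ 2)) s := by
  have ha : 0 < s ^ 2 + a ^ 2 := by positivity
  have hb : 0 < s ^ 2 + b ^ 2 := by positivity
  exact (sqrt_hasDerivAt a ha).add (sqrt_hasDerivAt b hb)

lemma φ_continuous (a b : ℝ) : Continuous (φ a b) := by
  unfold φ; fun_prop

lemma φ_strictMonoOn (a b : ℝ) : StrictMonoOn (φ a b) (Ici 0) := by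
  intro s hs s' _ hlt
  have h1 : s ^ 2 < s' ^ 2 := by
    have := pow_lt_pow_left₀ hlt hs (n := 2) two_ne_zero
    simpa using this
  exact add_lt_add (Real.sqrt_lt_sqrt (by positivity) (by linarith))
    (Real.sqrt_lt_sqrt (by positivity) (by linarith))

lemma φ_zero (a b : ℝ) : φ a b 0 = |a| + |b| := by
  simp [φ, Real.sqrt_sq_eq_abs]

lemma φ_image (a b : ℝ) : φ a b '' Ioi 0 = Ioi (|a| + |b|) := by
  rw [← φ_zero a b]
  apply Subset.antisymm
  · rintro t ⟨s, hs, rfl⟩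
    exact φ_strictMonoOn a b self_mem_Ici (mem_Ici.mpr (le_of_lt hs)) hs
  · intro t ht
    have ht' : φ a b 0 < t := ht
    have h0 : (0:ℝ) ≤ |a| + |b| := by positivity
    have htpos : 0 < t := lt_of_le_of_lt (by rw [φ_zero]; exact h0) ht'
    have hφt : t ≤ φ a b t := by
      have h1 : t ≤ √(t ^ 2 + a ^ 2) := by
        have h := Real.sqrt_le_sqrt (show t ^ 2 ≤ t ^ 2 + a ^ 2 by nlinarith)
        rwa [Real.sqrt_sq htpos.le] at h
      have h2 : 0 ≤ √(t ^ 2 + b ^ 2) := Real.sqrt_nonneg _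
      simp only [φ]
      linarith
    obtain ⟨s, hmem, hfs⟩ := intermediate_value_Icc htpos.le ((φ_continuous a b).continuousOn)
      (⟨ht'.le, hφt⟩ : t ∈ Icc (φ a b 0) (φ a b t))
    refine ⟨s, ?_, hfs⟩
    rcases eq_or_lt_of_le hmem.1 with h | h
    · exfalso; rw [← h] at hfs; rw [hfs] at ht'; exact lt_irrefl _ ht'
    · exact h

theorem sub1 {η : ℝ} (hη : 0 < η) (a b : ℝ) :
    ∫⁻ s in Ioi (0:ℝ), ENNReal.ofReal s *
        ENNReal.ofReal (exp (-η * √(s ^ 2 + a ^ 2)) / √(s ^ 2 + a ^ 2) *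
          (exp (-η * √(s ^ 2 + b ^ 2)) / √(s ^ 2 + b ^ 2))) =
      ∫⁻ t in Ioi (|a| + |b|), ENNReal.ofReal (exp (-η * t) / t) := by
  rw [← φ_image a b,
    lintegral_image_1d (f' := fun s => s / √(s ^ 2 + a ^ 2) + s / √(s ^ 2 + b ^ 2))
      measurableSet_Ioi (fun s hs => (φ_hasDerivAt a b hs).hasDerivWithinAt)
      ((φ_strictMonoOn a b).mono Ioi_subset_Ici_self).injOn]
  refine setLIntegral_congr_fun measurableSet_Ioi (fun s hs => ?_)
  have hs : (0:ℝ) < s := hs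
  have hu : (0:ℝ) < √(s ^ 2 + a ^ 2) := Real.sqrt_pos.mpr (by positivity)
  have hv : (0:ℝ) < √(s ^ 2 + b ^ 2) := Real.sqrt_pos.mpr (by positivity)
  set u := √(s ^ 2 + a ^ 2)
  set v := √(s ^ 2 + b ^ 2)
  have hd : (0:ℝ) ≤ s / u + s / v := by positivity
  rw [abs_of_nonneg hd, ← ENNReal.ofReal_mul hs.le, ← ENNReal.ofReal_mul hd]
  congr 1
  have hφ : φ a b s = u + v := rfl
  rw [hφ]
  have he : exp (-η * (u + v)) = exp (-η * u) * exp (-η * v) := by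
    rw [← Real.exp_add]; ring_nf
  rw [he]
  have huv : u + v ≠ 0 := by positivity
  field_simp
  ring

lemma vol_set {r : ℝ} (hr : 0 < r) (t : ℝ) :
    volume {z : ℝ | |z| + |z - r| < t} = if r < t then ENNReal.ofReal t else 0 := by
  have key : ∀ z : ℝ, |z| + |z - r| = max r |2 * z - r| := by
    intro z
    rcases le_total 0 z with h | h
    · rcases le_total z r with h' | h'
      · rw [abs_of_nonneg h, abs_of_nonpos (by linarith : z - r ≤ 0),
          max_eq_left (abs_le.mpr ⟨by linarith, by linarith⟩)]
        ring
      · rw [abs_of_nonneg h, abs_of_nonneg (by linarith : (0:ℝ) ≤ z - r),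
          abs_of_nonneg (by linarith : (0:ℝ) ≤ 2 * z - r),
          max_eq_right (by linarith : r ≤ 2 * z - r)]
        ring
    · rw [abs_of_nonpos h, abs_of_nonpos (by linarith : z - r ≤ 0),
        abs_of_nonpos (by linarith : 2 * z - r ≤ 0),
        max_eq_right (by linarith : r ≤ -(2 * z - r))]
      ring
  simp only [key]
  by_cases hrt : r < t
  · rw [if_pos hrt]
    have hset : {z : ℝ | max r |2 * z - r| < t} = Ioo ((r - t) / 2) ((r + t) / 2) := by
      ext z
      simp only [mem_setOf_eq, max_lt_iff, abs_lt, mem_Ioo]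
      constructor
      · rintro ⟨-, h1, h2⟩; constructor <;> linarith
      · rintro ⟨h1, h2⟩; exact ⟨hrt, by linarith, by linarith⟩
    rw [hset, Real.volume_Ioo]
    congr 1
    ring
  · rw [if_neg hrt]
    have hset : {z : ℝ | max r |2 * z - r| < t} = ∅ := by
      ext z
      simp only [mem_setOf_eq, max_lt_iff, mem_empty_iff_false, iff_false, not_and]
      intro h; exact absurd h hrt
    rw [hset, measure_empty]

theorem swap_eval {η r : ℝ} (hη : 0 < η) (hr : 0 < r) :
    ∫⁻ z : ℝ, ∫⁻ t in Ioi (|z| + |z - r|), ENNReal.ofReal (exp (-η * t) / t) =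
      ENNReal.ofReal (exp (-η * r) / η) := by
  set g : ℝ → ENNReal := fun t => ENNReal.ofReal (exp (-η * t) / t) with hg
  have hgm : Measurable g := by
    apply Measurable.ennreal_ofReal
    fun_prop
  have h1 : ∀ z : ℝ, ∫⁻ t in Ioi (|z| + |z - r|), g t
      = ∫⁻ t, (Ioi (|z| + |z - r|)).indicator g t := fun z =>
    (lintegral_indicator measurableSet_Ioi g).symm
  simp_rw [h1]
  rw [lintegral_lintegral_swap]
  · have h2 : ∀ t : ℝ, (∫⁻ z : ℝ, (Ioi (|z| + |z - r|)).indicator g t)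
        = g t * volume {z : ℝ | |z| + |z - r| < t} := by
      intro t
      have : ∀ z : ℝ, (Ioi (|z| + |z - r|)).indicator g t
          = {z : ℝ | |z| + |z - r| < t}.indicator (fun _ => g t) z := by
        intro z
        simp only [indicator_apply, mem_Ioi, mem_setOf_eq]
      simp_rw [this]
      rw [lintegral_indicator_const]
      exact measurableSet_lt (by fun_prop) measurable_const
    simp_rw [h2, vol_set hr]
    have h3 : ∀ t : ℝ, g t * (if r < t then ENNReal.ofReal t else 0)
        = (Ioi r).indicator (fun t => g t * ENNReal.ofReal t) t := by
      intro t
      by_cases h : r < t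
      · simp [h, indicator_apply, mem_Ioi]
      · simp [h, indicator_apply, mem_Ioi]
    simp_rw [h3]
    rw [lintegral_indicator measurableSet_Ioi]
    have h4 : ∫⁻ t in Ioi r, g t * ENNReal.ofReal t
        = ∫⁻ t in Ioi r, ENNReal.ofReal (exp (-η * t)) := by
      refine setLIntegral_congr_fun measurableSet_Ioi
        (fun t ht => ?_)
      have htpos : 0 < t := hr.trans ht
      rw [hg, ← ENNReal.ofReal_mul (by positivity), div_mul_cancel₀ _ htpos.ne']
    rw [h4]
    have h5 : ∫ t in Ioi r, exp (-η * t) = η⁻¹ * exp (-(η * r)) := by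
      have h6 := integral_comp_mul_left_Ioi (fun x => exp (-x)) r hη
      simp only [integral_exp_neg_Ioi, smul_eq_mul] at h6
      simp_rw [neg_mul]
      exact h6
    rw [← ofReal_integral_eq_lintegral_ofReal (exp_neg_integrableOn_Ioi r hη)
      (Filter.Eventually.of_forall fun t => (exp_pos _).le), h5]
    congr 1
    rw [neg_mul]
    ring
  · apply Measurable.aemeasurable
    have : Function.uncurry (fun z : ℝ => (Ioi (|z| + |z - r|)).indicator g)
        = fun p : ℝ × ℝ => if |p.1| + |p.1 - r| < p.2 then g p.2 else 0 := by
      funext p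
      simp only [Function.uncurry, indicator_apply, mem_Ioi]
    rw [this]
    exact Measurable.ite (measurableSet_lt (by fun_prop) measurable_snd)
      (hgm.comp measurable_snd) measurable_const

theorem plane_step {η : ℝ} (c d : ℝ) :
    ∫⁻ w : Fin 2 → ℝ, ENNReal.ofReal
        (exp (-η * √(c ^ 2 + ∑ j, w j ^ 2)) / √(c ^ 2 + ∑ j, w j ^ 2) *
          (exp (-η * √(d ^ 2 + ∑ j, w j ^ 2)) / √(d ^ 2 + ∑ j, w j ^ 2))) =
      (∫⁻ s in Ioi (0:ℝ), ENNReal.ofReal s *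
        ENNReal.ofReal (exp (-η * √(s ^ 2 + c ^ 2)) / √(s ^ 2 + c ^ 2) *
          (exp (-η * √(s ^ 2 + d ^ 2)) / √(s ^ 2 + d ^ 2)))) * ENNReal.ofReal (2 * π) := by
  have hmeas0 : Measurable fun q : ℝ => ENNReal.ofReal
      (exp (-η * √(c ^ 2 + q)) / √(c ^ 2 + q) * (exp (-η * √(d ^ 2 + q)) / √(d ^ 2 + q))) := by
    apply Measurable.ennreal_ofReal; fun_prop
  have step1 : ∫⁻ w : Fin 2 → ℝ, ENNReal.ofReal
        (exp (-η * √(c ^ 2 + ∑ j, w j ^ 2)) / √(c ^ 2 + ∑ j, w j ^ 2) *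
          (exp (-η * √(d ^ 2 + ∑ j, w j ^ 2)) / √(d ^ 2 + ∑ j, w j ^ 2))) =
      ∫⁻ p : ℝ × ℝ, ENNReal.ofReal
        (exp (-η * √(c ^ 2 + (p.1 ^ 2 + p.2 ^ 2))) / √(c ^ 2 + (p.1 ^ 2 + p.2 ^ 2)) *
          (exp (-η * √(d ^ 2 + (p.1 ^ 2 + p.2 ^ 2))) / √(d ^ 2 + (p.1 ^ 2 + p.2 ^ 2)))) := by
    rw [← (volume_preserving_finTwoArrow ℝ).lintegral_comp (by fun_prop)]
    congr 1
    funext w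
    simp [MeasurableEquiv.finTwoArrow, Fin.sum_univ_two]
  rw [step1]
  rw [lintegral_comp_polarCoord_symm]
  have step2 : ∀ p : ℝ × ℝ, p ∈ polarCoord.target →
      ENNReal.ofReal p.1 * ENNReal.ofReal
        (exp (-η * √(c ^ 2 + ((polarCoord.symm p).1 ^ 2 + (polarCoord.symm p).2 ^ 2))) /
            √(c ^ 2 + ((polarCoord.symm p).1 ^ 2 + (polarCoord.symm p).2 ^ 2)) *
          (exp (-η * √(d ^ 2 + ((polarCoord.symm p).1 ^ 2 + (polarCoord.symm p).2 ^ 2))) /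
            √(d ^ 2 + ((polarCoord.symm p).1 ^ 2 + (polarCoord.symm p).2 ^ 2)))) =
      ENNReal.ofReal p.1 * ENNReal.ofReal
        (exp (-η * √(p.1 ^ 2 + c ^ 2)) / √(p.1 ^ 2 + c ^ 2) *
          (exp (-η * √(p.1 ^ 2 + d ^ 2)) / √(p.1 ^ 2 + d ^ 2))) := by
    intro p _
    have hq : (polarCoord.symm p).1 ^ 2 + (polarCoord.symm p).2 ^ 2 = p.1 ^ 2 := by
      simp only [polarCoord_symm_apply]
      have := sin_sq_add_cos_sq p.2
      nlinarith [this]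
    rw [hq]
    ring_nf
  rw [setLIntegral_congr_fun polarCoord.open_target.measurableSet
    step2]
  have htarget : polarCoord.target = Ioi (0:ℝ) ×ˢ Ioo (-π) π := rfl
  rw [htarget]
  rw [show (volume : Measure (ℝ × ℝ)) = (volume : Measure ℝ).prod volume from Measure.volume_eq_prod ℝ ℝ,
    ← Measure.prod_restrict]
  rw [lintegral_prod _ (by
    apply Measurable.aemeasurable
    apply Measurable.fun_mul
    · exact measurable_fst.ennreal_ofReal
    · apply Measurable.ennreal_ofReal; fun_prop)]
  have step3 : ∀ s : ℝ, (∫⁻ _ in Ioo (-π) π, (ENNReal.ofReal s * ENNReal.ofReal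
        (exp (-η * √(s ^ 2 + c ^ 2)) / √(s ^ 2 + c ^ 2) *
          (exp (-η * √(s ^ 2 + d ^ 2)) / √(s ^ 2 + d ^ 2))))) =
      ENNReal.ofReal s * ENNReal.ofReal
        (exp (-η * √(s ^ 2 + c ^ 2)) / √(s ^ 2 + c ^ 2) *
          (exp (-η * √(s ^ 2 + d ^ 2)) / √(s ^ 2 + d ^ 2))) * ENNReal.ofReal (2 * π) := by
    intro s
    rw [setLIntegral_const, Real.volume_Ioo]
    congr 1
    ring
  simp_rw [step3]
  rw [lintegral_mul_const' _ _ ENNReal.ofReal_ne_top]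

theorem key {η r : ℝ} (hη : 0 < η) (hr : 0 < r) :
    ∫⁻ x : EuclideanSpace ℝ (Fin 3), ENNReal.ofReal
        (exp (-η * ‖x‖) / ‖x‖ *
          (exp (-η * ‖x - EuclideanSpace.single (0 : Fin 3) r‖) /
            ‖x - EuclideanSpace.single (0 : Fin 3) r‖)) =
      ENNReal.ofReal (2 * π * exp (-η * r) / η) := by
  have hG : Measurable fun x : EuclideanSpace ℝ (Fin 3) => ENNReal.ofReal
      (exp (-η * ‖x‖) / ‖x‖ *
        (exp (-η * ‖x - EuclideanSpace.single (0 : Fin 3) r‖) /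
          ‖x - EuclideanSpace.single (0 : Fin 3) r‖)) := by
    apply Measurable.ennreal_ofReal
    fun_prop
  rw [← ((EuclideanSpace.volume_preserving_symm_measurableEquiv_toLp (Fin 3)).symm _).lintegral_comp hG]
  have hA : ∀ v : Fin 3 → ℝ, ENNReal.ofReal
      (exp (-η * ‖(MeasurableEquiv.toLp 2 (Fin 3 → ℝ)).symm.symm v‖) /
          ‖(MeasurableEquiv.toLp 2 (Fin 3 → ℝ)).symm.symm v‖ *
        (exp (-η * ‖(MeasurableEquiv.toLp 2 (Fin 3 → ℝ)).symm.symm v -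
              EuclideanSpace.single (0 : Fin 3) r‖) /
          ‖(MeasurableEquiv.toLp 2 (Fin 3 → ℝ)).symm.symm v -
              EuclideanSpace.single (0 : Fin 3) r‖)) =
      ENNReal.ofReal
        (exp (-η * √(∑ i, v i ^ 2)) / √(∑ i, v i ^ 2) *
          (exp (-η * √(∑ i, (v i - if i = 0 then r else 0) ^ 2)) /
            √(∑ i, (v i - if i = 0 then r else 0) ^ 2))) := by
    intro v
    have h1 : ‖(MeasurableEquiv.toLp 2 (Fin 3 → ℝ)).symm.symm v‖ = √(∑ i, v i ^ 2) := by
      rw [EuclideanSpace.norm_eq]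
      congr 1
      refine Finset.sum_congr rfl fun i _ => ?_
      simp [Real.norm_eq_abs, sq_abs]
    have h2 : ‖(MeasurableEquiv.toLp 2 (Fin 3 → ℝ)).symm.symm v -
        EuclideanSpace.single (0 : Fin 3) r‖ = √(∑ i, (v i - if i = 0 then r else 0) ^ 2) := by
      rw [EuclideanSpace.norm_eq]
      congr 1
      refine Finset.sum_congr rfl fun i _ => ?_
      simp [Real.norm_eq_abs, sq_abs,
        EuclideanSpace.single_apply]
    rw [h1, h2]
  simp_rw [hA]
  have hB : Measurable fun v : Fin 3 → ℝ => ENNReal.ofReal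
      (exp (-η * √(∑ i, v i ^ 2)) / √(∑ i, v i ^ 2) *
        (exp (-η * √(∑ i, (v i - if i = 0 then r else 0) ^ 2)) /
          √(∑ i, (v i - if i = 0 then r else 0) ^ 2))) := by
    apply Measurable.ennreal_ofReal
    have hm1 : Measurable fun v : Fin 3 → ℝ => ∑ i, v i ^ 2 := by
      apply Finset.measurable_sum
      intro i _
      fun_prop
    have hm2 : Measurable fun v : Fin 3 → ℝ => ∑ i, (v i - if i = 0 then r else 0) ^ 2 := by
      apply Finset.measurable_sum
      intro i _
      fun_prop
    fun_prop
  rw [← ((volume_preserving_piFinSuccAbove (fun _ : Fin 3 => ℝ) 0).symm _).lintegral_comp hB]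
  have hC : ∀ q : ℝ × (Fin 2 → ℝ),
      (ENNReal.ofReal
        (exp (-η * √(∑ i, ((MeasurableEquiv.piFinSuccAbove (fun _ : Fin 3 => ℝ) 0).symm q) i ^ 2)) /
            √(∑ i, ((MeasurableEquiv.piFinSuccAbove (fun _ : Fin 3 => ℝ) 0).symm q) i ^ 2) *
          (exp (-η * √(∑ i, (((MeasurableEquiv.piFinSuccAbove (fun _ : Fin 3 => ℝ) 0).symm q) i -
                if i = 0 then r else 0) ^ 2)) /
            √(∑ i, (((MeasurableEquiv.piFinSuccAbove (fun _ : Fin 3 => ℝ) 0).symm q) i -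
                if i = 0 then r else 0) ^ 2)))) =
      ENNReal.ofReal
        (exp (-η * √(q.1 ^ 2 + ∑ j, q.2 j ^ 2)) / √(q.1 ^ 2 + ∑ j, q.2 j ^ 2) *
          (exp (-η * √((q.1 - r) ^ 2 + ∑ j, q.2 j ^ 2)) /
            √((q.1 - r) ^ 2 + ∑ j, q.2 j ^ 2))) := by
    rintro ⟨z, w⟩
    have happ : ((MeasurableEquiv.piFinSuccAbove (fun _ : Fin 3 => ℝ) 0).symm (z, w))
        = Fin.insertNth (α := fun _ : Fin 3 => ℝ) 0 z w := by
      simp [MeasurableEquiv.piFinSuccAbove_symm_apply, Fin.insertNthEquiv]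
    have hs1 : ∑ i : Fin 3, (Fin.insertNth (α := fun _ : Fin 3 => ℝ) 0 z w i) ^ 2 = z ^ 2 + ∑ j : Fin 2, w j ^ 2 := by
      rw [Fin.sum_univ_succ]
      simp [Fin.insertNth_apply_same]
    have hs2 : ∑ i : Fin 3, (Fin.insertNth (α := fun _ : Fin 3 => ℝ) 0 z w i - if i = 0 then r else 0) ^ 2
        = (z - r) ^ 2 + ∑ j : Fin 2, w j ^ 2 := by
      rw [Fin.sum_univ_succ]
      simp [Fin.insertNth_apply_same, Fin.succ_ne_zero]
    simp only [happ, hs1, hs2]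
  simp_rw [hC]
  rw [show (volume : Measure (ℝ × (Fin 2 → ℝ)))
      = (volume : Measure ℝ).prod (volume : Measure (Fin 2 → ℝ)) from rfl]
  rw [lintegral_prod _ (by
    apply Measurable.aemeasurable
    apply Measurable.ennreal_ofReal
    have hm1 : Measurable fun q : ℝ × (Fin 2 → ℝ) => ∑ j, q.2 j ^ 2 := by
      apply Finset.measurable_sum
      intro j _
      fun_prop
    fun_prop)]
  have hD : ∀ z : ℝ, ∫⁻ w : Fin 2 → ℝ, ENNReal.ofReal
        (exp (-η * √(z ^ 2 + ∑ j, w j ^ 2)) / √(z ^ 2 + ∑ j, w j ^ 2) *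
          (exp (-η * √((z - r) ^ 2 + ∑ j, w j ^ 2)) / √((z - r) ^ 2 + ∑ j, w j ^ 2))) =
      (∫⁻ t in Ioi (|z| + |z - r|), ENNReal.ofReal (exp (-η * t) / t)) *
        ENNReal.ofReal (2 * π) := by
    intro z
    rw [plane_step z (z - r), sub1 hη z (z - r)]
  simp_rw [hD]
  rw [lintegral_mul_const' _ _ ENNReal.ofReal_ne_top, swap_eval hη hr, ← ENNReal.ofReal_mul (by positivity)]
  congr 1
  ring

theorem main_lintegral {η : ℝ} (hη : 0 < η) (y : EuclideanSpace ℝ (Fin 3)) (hy : 0 < ‖y‖) :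
    ∫⁻ x : EuclideanSpace ℝ (Fin 3), ENNReal.ofReal
        (exp (-η * ‖x‖) / ‖x‖ * (exp (-η * ‖x - y‖) / ‖x - y‖)) =
      ENNReal.ofReal (2 * π * exp (-η * ‖y‖) / η) := by
  set r := ‖y‖ with hr
  set y₀ : EuclideanSpace ℝ (Fin 3) := EuclideanSpace.single (0 : Fin 3) r with hy₀
  have hnorm : ‖y₀‖ = ‖y‖ := by
    rw [hy₀, EuclideanSpace.norm_single, Real.norm_eq_abs, abs_of_pos hy]
  set R := Submodule.reflection (ℝ ∙ (y₀ - y))ᗮ with hR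
  have hRy : R y₀ = y := Submodule.reflection_sub hnorm
  have hG : Measurable fun x : EuclideanSpace ℝ (Fin 3) => ENNReal.ofReal
      (exp (-η * ‖x‖) / ‖x‖ * (exp (-η * ‖x - y‖) / ‖x - y‖)) := by
    apply Measurable.ennreal_ofReal
    fun_prop
  rw [← (LinearIsometryEquiv.measurePreserving R).lintegral_comp hG]
  have hpt : ∀ x : EuclideanSpace ℝ (Fin 3), ENNReal.ofReal
      (exp (-η * ‖R x‖) / ‖R x‖ * (exp (-η * ‖R x - y‖) / ‖R x - y‖)) =
      ENNReal.ofReal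
        (exp (-η * ‖x‖) / ‖x‖ * (exp (-η * ‖x - y₀‖) / ‖x - y₀‖)) := by
    intro x
    have h1 : ‖R x‖ = ‖x‖ := R.norm_map x
    have h2 : ‖R x - y‖ = ‖x - y₀‖ := by
      rw [← hRy, ← map_sub, R.norm_map]
    rw [h1, h2]
  simp_rw [hpt]
  exact key hη (hr ▸ hy)

end Stmt5Aux

open Stmt5Aux in
theorem stmt5 (η : ℝ) (hη : 0 < η) (y : EuclideanSpace ℝ (Fin 3)) (hy : 0 < ‖y‖) :
    ∫ x₁ : EuclideanSpace ℝ (Fin 3),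
        Real.exp (-η * ‖x₁‖) / ‖x₁‖ * (Real.exp (-η * ‖x₁ - y‖) / ‖x₁ - y‖) =
      2 * π * Real.exp (-η * ‖y‖) / η := by
  have hnn : ∀ x : EuclideanSpace ℝ (Fin 3),
      0 ≤ exp (-η * ‖x‖) / ‖x‖ * (exp (-η * ‖x - y‖) / ‖x - y‖) := by
    intro x
    positivity
  have hmeas : Measurable fun x : EuclideanSpace ℝ (Fin 3) =>
      exp (-η * ‖x‖) / ‖x‖ * (exp (-η * ‖x - y‖) / ‖x - y‖) := by fun_prop
  rw [MeasureTheory.integral_eq_lintegral_of_nonneg_ae (Filter.Eventually.of_forall hnn)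
    hmeas.aestronglyMeasurable, main_lintegral hη y hy,
    ENNReal.toReal_ofReal (by positivity)]
end
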